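/- Let C be the 5×5 integer matrix with rows [4,1,2,2,0], [1,3,2,0,1], [2,2,4,1,2], [2,0,1,3,0], [0,1,2,0,2], and let D₀ be the 8×5 matrix over the nonnegative integers with rows [1,0,0,0,0], [0,1,0,0,0], [1,1,1,0,0], [1,0,0,1,0], [0,0,0,1,0], [1,0,1,1,0], [0,0,1,0,1], [0,1,1,0,1]. Then for every 8×5 matrix D with nonnegative integer entries, the equation Dᵀ·D = C holds if and only if there exists a permutation σ of the 8 row indices such that D(i,j) = D₀(σ(i),j) for all i,j. In particular, up to a permutation of rows, D₀ is the unique nonnegative integer solution of Dᵀ·D = C. -/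

import Mathlib

set_option maxHeartbeats 2000000

def stmt6C : Matrix (Fin 5) (Fin 5) ℤ :=
  !![4, 1, 2, 2, 0;
    1, 3, 2, 0, 1;
    2, 2, 4, 1, 2;
    2, 0, 1, 3, 0;
    0, 1, 2, 0, 2]

def stmt6D0 : Matrix (Fin 8) (Fin 5) ℤ :=
  !![1, 0, 0, 0, 0;
    0, 1, 0, 0, 0;
    1, 1, 1, 0, 0;
    1, 0, 0, 1, 0;
    0, 0, 0, 1, 0;
    1, 0, 1, 1, 0;
    0, 0, 1, 0, 1;
    0, 1, 1, 0, 1]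

abbrev B5 := Bool × Bool × Bool × Bool × Bool

def stmt6pws (D : Matrix (Fin 8) (Fin 5) ℤ) (i : Fin 8) : B5 :=
  (decide (D i 0 = 1), decide (D i 1 = 1), decide (D i 2 = 1),
   decide (D i 3 = 1), decide (D i 4 = 1))

def stmt6cnt (D : Matrix (Fin 8) (Fin 5) ℤ) (v : B5) : ℕ :=
  (Finset.univ.filter fun i => stmt6pws D i = v).card

def stmt6prj (v : B5) : Fin 5 → ℤ :=
  ![cond v.1 1 0, cond v.2.1 1 0, cond v.2.2.1 1 0, cond v.2.2.2.1 1 0, cond v.2.2.2.2 1 0]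

def stmt6t : Fin 8 → B5 :=
  ![(true, false, false, false, false), (false, true, false, false, false), (true, true, true, false, false), (true, false, false, true, false), (false, false, false, true, false), (true, false, true, true, false), (false, false, true, false, true), (false, true, true, false, true)]

theorem stmt6counts (n0 : ℤ) (n1 : ℤ) (n2 : ℤ) (n3 : ℤ) (n4 : ℤ) (n5 : ℤ) (n6 : ℤ) (n7 : ℤ) (n8 : ℤ) (n9 : ℤ) (n10 : ℤ) (n11 : ℤ) (n12 : ℤ) (n13 : ℤ) (n14 : ℤ) (n15 : ℤ) (n16 : ℤ) (n17 : ℤ) (n18 : ℤ) (n19 : ℤ) (n20 : ℤ) (n21 : ℤ) (n22 : ℤ) (n23 : ℤ) (n24 : ℤ) (n25 : ℤ) (n26 : ℤ) (n27 : ℤ) (n28 : ℤ) (n29 : ℤ) (n30 : ℤ) (n31 : ℤ)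
  (hp0 : 0 ≤ n0) (hp1 : 0 ≤ n1) (hp2 : 0 ≤ n2) (hp3 : 0 ≤ n3) (hp4 : 0 ≤ n4) (hp5 : 0 ≤ n5) (hp6 : 0 ≤ n6) (hp7 : 0 ≤ n7) (hp8 : 0 ≤ n8) (hp9 : 0 ≤ n9) (hp10 : 0 ≤ n10) (hp11 : 0 ≤ n11) (hp12 : 0 ≤ n12) (hp13 : 0 ≤ n13) (hp14 : 0 ≤ n14) (hp15 : 0 ≤ n15) (hp16 : 0 ≤ n16) (hp17 : 0 ≤ n17) (hp18 : 0 ≤ n18) (hp19 : 0 ≤ n19) (hp20 : 0 ≤ n20) (hp21 : 0 ≤ n21) (hp22 : 0 ≤ n22) (hp23 : 0 ≤ n23) (hp24 : 0 ≤ n24) (hp25 : 0 ≤ n25) (hp26 : 0 ≤ n26) (hp27 : 0 ≤ n27) (hp28 : 0 ≤ n28) (hp29 : 0 ≤ n29) (hp30 : 0 ≤ n30) (hp31 : 0 ≤ n31)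
  (h : n0 + n1 + n2 + n3 + n4 + n5 + n6 + n7 + n8 + n9 + n10 + n11 + n12 + n13 + n14 + n15 + n16 + n17 + n18 + n19 + n20 + n21 + n22 + n23 + n24 + n25 + n26 + n27 + n28 + n29 + n30 + n31 = 8)
  (h00 : n1 + n3 + n5 + n7 + n9 + n11 + n13 + n15 + n17 + n19 + n21 + n23 + n25 + n27 + n29 + n31 = 4)
  (h01 : n3 + n7 + n11 + n15 + n19 + n23 + n27 + n31 = 1)
  (h02 : n5 + n7 + n13 + n15 + n21 + n23 + n29 + n31 = 2)
  (h03 : n9 + n11 + n13 + n15 + n25 + n27 + n29 + n31 = 2)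
  (h04 : n17 + n19 + n21 + n23 + n25 + n27 + n29 + n31 = 0)
  (h11 : n2 + n3 + n6 + n7 + n10 + n11 + n14 + n15 + n18 + n19 + n22 + n23 + n26 + n27 + n30 + n31 = 3)
  (h12 : n6 + n7 + n14 + n15 + n22 + n23 + n30 + n31 = 2)
  (h13 : n10 + n11 + n14 + n15 + n26 + n27 + n30 + n31 = 0)
  (h14 : n18 + n19 + n22 + n23 + n26 + n27 + n30 + n31 = 1)
  (h22 : n4 + n5 + n6 + n7 + n12 + n13 + n14 + n15 + n20 + n21 + n22 + n23 + n28 + n29 + n30 + n31 = 4)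
  (h23 : n12 + n13 + n14 + n15 + n28 + n29 + n30 + n31 = 1)
  (h24 : n20 + n21 + n22 + n23 + n28 + n29 + n30 + n31 = 2)
  (h33 : n8 + n9 + n10 + n11 + n12 + n13 + n14 + n15 + n24 + n25 + n26 + n27 + n28 + n29 + n30 + n31 = 3)
  (h34 : n24 + n25 + n26 + n27 + n28 + n29 + n30 + n31 = 0)
  (h44 : n16 + n17 + n18 + n19 + n20 + n21 + n22 + n23 + n24 + n25 + n26 + n27 + n28 + n29 + n30 + n31 = 2) :
  n0 = 0 ∧ n1 = 1 ∧ n2 = 1 ∧ n3 = 0 ∧ n4 = 0 ∧ n5 = 0 ∧ n6 = 0 ∧ n7 = 1 ∧ n8 = 1 ∧ n9 = 1 ∧ n10 = 0 ∧ n11 = 0 ∧ n12 = 0 ∧ n13 = 1 ∧ n14 = 0 ∧ n15 = 0 ∧ n16 = 0 ∧ n17 = 0 ∧ n18 = 0 ∧ n19 = 0 ∧ n20 = 1 ∧ n21 = 0 ∧ n22 = 1 ∧ n23 = 0 ∧ n24 = 0 ∧ n25 = 0 ∧ n26 = 0 ∧ n27 = 0 ∧ n28 = 0 ∧ n29 =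 0 ∧ n30 = 0 ∧ n31 = 0 := by
  have w17 : n17 = 0 ∧ n19 = 0 ∧ n21 = 0 ∧ n23 = 0 ∧ n25 = 0 ∧ n27 = 0 ∧ n29 = 0 ∧ n31 = 0 := by clear h h00 h01 h02 h03 h11 h12 h13 h14 h22 h23 h24 h33 h34 h44; omega
  obtain ⟨e17, e19, e21, e23, e25, e27, e29, e31⟩ := w17
  have w24 : n24 = 0 ∧ n26 = 0 ∧ n28 = 0 ∧ n30 = 0 := by clear h h00 h01 h02 h03 h04 h11 h12 h13 h14 h22 h23 h24 h33 h44 e17 e19 e21 e23; omega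
  obtain ⟨e24, e26, e28, e30⟩ := w24
  have w10 : n10 = 0 ∧ n11 = 0 ∧ n14 = 0 ∧ n15 = 0 := by clear h h00 h01 h02 h03 h04 h11 h12 h14 h22 h23 h24 h33 h34 h44 e17 e19 e21 e23 e25 e29 e24 e28; omega
  obtain ⟨e10, e11, e14, e15⟩ := w10
  have w16 : n16 = 0 ∧ n18 = 0 ∧ n20 = 1 ∧ n22 = 1 := by clear h h00 h01 h02 h03 h04 h11 h12 h13 h22 h23 h33 h34 e10 e11 e14 e15; omega
  obtain ⟨e16, e18, e20, e22⟩ := w16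
  have w0 : n0 = 0 ∧ n1 = 1 ∧ n2 = 1 ∧ n3 = 0 ∧ n4 = 0 ∧ n5 = 0 ∧ n6 = 0 ∧ n7 = 1 ∧ n8 = 1 ∧ n9 = 1 ∧ n12 = 0 ∧ n13 = 1 := by clear h04 h13 h14 h24 h34 h44; omega
  obtain ⟨e0, e1, e2, e3, e4, e5, e6, e7, e8, e9, e12, e13⟩ := w0
  exact ⟨e0, e1, e2, e3, e4, e5, e6, e7, e8, e9, e10, e11, e12, e13, e14, e15, e16, e17, e18, e19, e20, e21, e22, e23, e24, e25, e26, e27, e28, e29, e30, e31⟩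


theorem stmt6aux (a b : Fin 8 → ℤ) (ha0 : ∀ i, 0 ≤ a i) (ha2 : ∀ i, a i ≤ 2)
    (hb0 : ∀ i, 0 ≤ b i) (hb1 : ∀ i, b i ≤ 1)
    (h4 : ∑ i, a i * a i = 4) (h1 : ∑ i, a i * b i = 1) : ∀ i, a i ≤ 1 := by
  intro i
  by_contra hcon
  push_neg at hcon
  have hai : a i = 2 := le_antisymm (ha2 i) hcon
  have hsplit : a i * a i + ∑ x ∈ Finset.univ.erase i, a x * a x = ∑ x : Fin 8, a x * a x :=
    Finset.add_sum_erase Finset.univ (fun k => a k * a k) (Finset.mem_univ i)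
  have hrest : ∑ k ∈ Finset.univ.erase i, a k * a k = 0 := by
    rw [hai] at hsplit; rw [h4] at hsplit; linarith
  have hz : ∀ k ∈ Finset.univ.erase i, a k * a k = 0 :=
    (Finset.sum_eq_zero_iff_of_nonneg (fun k _ => mul_self_nonneg _)).mp hrest
  have hsplit2 : a i * b i + ∑ x ∈ Finset.univ.erase i, a x * b x = ∑ x : Fin 8, a x * b x :=
    Finset.add_sum_erase Finset.univ (fun k => a k * b k) (Finset.mem_univ i)
  have hrest2 : ∑ k ∈ Finset.univ.erase i, a k * b k = 0 :=
    Finset.sum_eq_zero fun k hk => by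
      rw [mul_self_eq_zero.mp (hz k hk), zero_mul]
  rw [hrest2, h1, hai] at hsplit2
  have := hb0 i
  have := hb1 i
  omega

theorem stmt6D0gram : ∀ j k : Fin 5, (∑ m : Fin 8, stmt6D0 m j * stmt6D0 m k) = stmt6C j k := by
  intro j k; fin_cases j <;> fin_cases k <;> decide

theorem stmt6D0prj : ∀ (m : Fin 8) (j : Fin 5), stmt6D0 m j = stmt6prj (stmt6t m) j := by
  intro m j; fin_cases m <;> fin_cases j <;> decide


theorem stmt6 (D : Matrix (Fin 8) (Fin 5) ℤ) (hD : ∀ i j, 0 ≤ D i j) :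
    D.transpose * D = stmt6C ↔
      ∃ σ : Equiv.Perm (Fin 8), ∀ i j, D i j = stmt6D0 (σ i) j := by
  constructor
  · intro hG
    have hjk : ∀ j k : Fin 5, ∑ i : Fin 8, D i j * D i k = stmt6C j k := by
      intro j k
      have := congrFun (congrFun hG j) k
      simpa [Matrix.mul_apply, Matrix.transpose_apply] using this
    -- entries are bounded
    have hsq : ∀ (j : Fin 5) (i : Fin 8), D i j * D i j ≤ stmt6C j j := by
      intro j i
      rw [← hjk j j]
      exact Finset.single_le_sum (fun k _ => mul_self_nonneg (D k j)) (Finset.mem_univ i)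
    have hle1 : ∀ i j, D i j ≤ 1 := by
      have b1 : ∀ i, D i 1 ≤ 1 := by
        intro i; have := hsq 1 i; have := hD i 1; simp [stmt6C] at *; nlinarith
      have b3 : ∀ i, D i 3 ≤ 1 := by
        intro i; have := hsq 3 i; have := hD i 3; simp [stmt6C] at *; nlinarith
      have b4 : ∀ i, D i 4 ≤ 1 := by
        intro i; have := hsq 4 i; have := hD i 4; simp [stmt6C] at *; nlinarith
      have b0 : ∀ i, D i 0 ≤ 1 := by
        refine stmt6aux (fun i => D i 0) (fun i => D i 1) (fun i => hD i 0) ?_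
          (fun i => hD i 1) b1 ?_ ?_
        · intro i; have := hsq 0 i; have := hD i 0; simp [stmt6C] at *; nlinarith
        · simpa [stmt6C] using hjk 0 0
        · simpa [stmt6C] using hjk 0 1
      have b2 : ∀ i, D i 2 ≤ 1 := by
        refine stmt6aux (fun i => D i 2) (fun i => D i 3) (fun i => hD i 2) ?_
          (fun i => hD i 3) b3 ?_ ?_
        · intro i; have := hsq 2 i; have := hD i 2; simp [stmt6C] at *; nlinarith
        · simpa [stmt6C] using hjk 2 2
        · simpa [stmt6C] using hjk 2 3
      intro i j
      fin_cases j
      · exact b0 i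
      · exact b1 i
      · exact b2 i
      · exact b3 i
      · exact b4 i
    have hbit : ∀ i j, D i j = 0 ∨ D i j = 1 := by
      intro i j; have := hD i j; have := hle1 i j; omega
    have hDif : ∀ i j, D i j = stmt6prj (stmt6pws D i) j := by
      intro i j
      fin_cases j <;>
        [rcases hbit i 0 with h | h; rcases hbit i 1 with h | h;
         rcases hbit i 2 with h | h; rcases hbit i 3 with h | h;
         rcases hbit i 4 with h | h] <;>
      simp [stmt6pws, stmt6prj, h]
    have key : ∀ j k : Fin 5,
        ∑ v : B5, (stmt6cnt D v : ℤ) * (stmt6prj v j * stmt6prj v k) = stmt6C j k := by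
      intro j k
      calc ∑ v : B5, (stmt6cnt D v : ℤ) * (stmt6prj v j * stmt6prj v k)
          = ∑ v : B5, ∑ _i ∈ Finset.univ.filter (fun i => stmt6pws D i = v),
              stmt6prj v j * stmt6prj v k := by
            refine Finset.sum_congr rfl fun v _ => ?_
            rw [Finset.sum_const, stmt6cnt, nsmul_eq_mul]
        _ = ∑ i : Fin 8, stmt6prj (stmt6pws D i) j * stmt6prj (stmt6pws D i) k :=
            Finset.sum_fiberwise' Finset.univ (stmt6pws D)
              (fun v => stmt6prj v j * stmt6prj v k)
        _ = ∑ i : Fin 8, D i j * D i k :=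
            Finset.sum_congr rfl fun i _ => by rw [← hDif, ← hDif]
        _ = stmt6C j k := hjk j k
    have Etot : ∑ v : B5, (stmt6cnt D v : ℤ) = 8 := by
      have : ∑ v : B5, ∑ _i ∈ Finset.univ.filter (fun i => stmt6pws D i = v), (1 : ℤ)
          = ∑ _i : Fin 8, (1 : ℤ) := Finset.sum_fiberwise' Finset.univ (stmt6pws D) (fun _ => 1)
      simp only [Finset.sum_const, nsmul_eq_mul, mul_one] at this
      simpa [stmt6cnt] using this
    simp only [Fintype.sum_prod_type, Fintype.sum_bool] at Etot
    have E00 := key 0 0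
    simp only [Fintype.sum_prod_type, Fintype.sum_bool, stmt6prj, stmt6C, Matrix.of_apply, Matrix.cons_val] at E00
    norm_num at E00
    have E01 := key 0 1
    simp only [Fintype.sum_prod_type, Fintype.sum_bool, stmt6prj, stmt6C, Matrix.of_apply, Matrix.cons_val] at E01
    norm_num at E01
    have E02 := key 0 2
    simp only [Fintype.sum_prod_type, Fintype.sum_bool, stmt6prj, stmt6C, Matrix.of_apply, Matrix.cons_val] at E02
    norm_num at E02
    have E03 := key 0 3
    simp only [Fintype.sum_prod_type, Fintype.sum_bool, stmt6prj, stmt6C, Matrix.of_apply, Matrix.cons_val] at E03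
    norm_num at E03
    have E04 := key 0 4
    simp only [Fintype.sum_prod_type, Fintype.sum_bool, stmt6prj, stmt6C, Matrix.of_apply, Matrix.cons_val] at E04
    norm_num at E04
    have E11 := key 1 1
    simp only [Fintype.sum_prod_type, Fintype.sum_bool, stmt6prj, stmt6C, Matrix.of_apply, Matrix.cons_val] at E11
    norm_num at E11
    have E12 := key 1 2
    simp only [Fintype.sum_prod_type, Fintype.sum_bool, stmt6prj, stmt6C, Matrix.of_apply, Matrix.cons_val] at E12
    norm_num at E12
    have E13 := key 1 3
    simp only [Fintype.sum_prod_type, Fintype.sum_bool, stmt6prj, stmt6C, Matrix.of_apply, Matrix.cons_val] at E13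
    norm_num at E13
    have E14 := key 1 4
    simp only [Fintype.sum_prod_type, Fintype.sum_bool, stmt6prj, stmt6C, Matrix.of_apply, Matrix.cons_val] at E14
    norm_num at E14
    have E22 := key 2 2
    simp only [Fintype.sum_prod_type, Fintype.sum_bool, stmt6prj, stmt6C, Matrix.of_apply, Matrix.cons_val] at E22
    norm_num at E22
    have E23 := key 2 3
    simp only [Fintype.sum_prod_type, Fintype.sum_bool, stmt6prj, stmt6C, Matrix.of_apply, Matrix.cons_val] at E23
    norm_num at E23
    have E24 := key 2 4
    simp only [Fintype.sum_prod_type, Fintype.sum_bool, stmt6prj, stmt6C, Matrix.of_apply, Matrix.cons_val] at E24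
    norm_num at E24
    have E33 := key 3 3
    simp only [Fintype.sum_prod_type, Fintype.sum_bool, stmt6prj, stmt6C, Matrix.of_apply, Matrix.cons_val] at E33
    norm_num at E33
    have E34 := key 3 4
    simp only [Fintype.sum_prod_type, Fintype.sum_bool, stmt6prj, stmt6C, Matrix.of_apply, Matrix.cons_val] at E34
    norm_num at E34
    have E44 := key 4 4
    simp only [Fintype.sum_prod_type, Fintype.sum_bool, stmt6prj, stmt6C, Matrix.of_apply, Matrix.cons_val] at E44
    norm_num at E44
    obtain ⟨g0, g1, g2, g3, g4, g5, g6, g7, g8, g9, g10, g11, g12, g13, g14, g15, g16, g17, g18, g19, g20, g21, g22, g23, g24, g25, g26, g27, g28, g29, g30, g31⟩ :=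
      stmt6counts ((stmt6cnt D (false, false, false, false, false) : ℤ)) ((stmt6cnt D (true, false, false, false, false) : ℤ)) ((stmt6cnt D (false, true, false, false, false) : ℤ)) ((stmt6cnt D (true, true, false, false, false) : ℤ)) ((stmt6cnt D (false, false, true, false, false) : ℤ)) ((stmt6cnt D (true, false, true, false, false) : ℤ)) ((stmt6cnt D (false, true, true, false, false) : ℤ)) ((stmt6cnt D (true, true, true, false, false) : ℤ)) ((stmt6cnt D (false, false, false, true, false) : ℤ)) ((stmt6cnt D (true, false, false, true, false) : ℤ)) ((stmt6cnt D (false, true, false, true, false) : ℤ)) ((stmt6cnt D (true, true, false, true, false) : ℤ)) ((stmt6cnt D (false, false, true, true, false) : ℤ)) ((stmt6cnt D (true, false, true, true, false) : ℤ)) ((stmt6cnt D (false, true, true, true, false) : ℤ)) ((stmt6cnt D (true, true, true, true, false) : ℤ)) ((stmt6cnt D (false, false, false, false, true) : ℤ)) ((stmt6cnt D (true, false, false, false, true) : ℤ)) ((stmt6cnt D (false, true, false, false, true) : ℤ)) ((stmt6cnt D (true, true, false, false, true) : ℤ)) ((stmt6cnt D (false, false, true, false, true) : ℤ)) ((stmt6cnt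 D (true, false, true, false, true) : ℤ)) ((stmt6cnt D (false, true, true, false, true) : ℤ)) ((stmt6cnt D (true, true, true, false, true) : ℤ)) ((stmt6cnt D (false, false, false, true, true) : ℤ)) ((stmt6cnt D (true, false, false, true, true) : ℤ)) ((stmt6cnt D (false, true, false, true, true) : ℤ)) ((stmt6cnt D (true, true, false, true, true) : ℤ)) ((stmt6cnt D (false, false, true, true, true) : ℤ)) ((stmt6cnt D (true, false, true, true, true) : ℤ)) ((stmt6cnt D (false, true, true, true, true) : ℤ)) ((stmt6cnt D (true, true, true, true, true) : ℤ))
        (Int.natCast_nonneg _) (Int.natCast_nonneg _) (Int.natCast_nonneg _) (Int.natCast_nonneg _) (Int.natCast_nonneg _) (Int.natCast_nonneg _) (Int.natCast_nonneg _) (Int.natCast_nonneg _) (Int.natCast_nonneg _) (Int.natCast_nonneg _) (Int.natCast_nonneg _) (Int.natCast_nonneg _) (Int.natCast_nonneg _) (Int.natCast_nonneg _) (Int.natCast_nonneg _) (Int.natCast_nonneg _) (Int.natCast_nonneg _) (Int.natCast_nonneg _) (Int.natCast_nonneg _) (Int.natCast_nonneg _) (Int.natCast_nonneg _) (Int.natCast_nonneg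 _) (Int.natCast_nonneg _) (Int.natCast_nonneg _) (Int.natCast_nonneg _) (Int.natCast_nonneg _) (Int.natCast_nonneg _) (Int.natCast_nonneg _) (Int.natCast_nonneg _) (Int.natCast_nonneg _) (Int.natCast_nonneg _) (Int.natCast_nonneg _)
        (by linarith only [Etot]) (by linarith only [E00]) (by linarith only [E01]) (by linarith only [E02]) (by linarith only [E03]) (by linarith only [E04]) (by linarith only [E11]) (by linarith only [E12]) (by linarith only [E13]) (by linarith only [E14]) (by linarith only [E22]) (by linarith only [E23]) (by linarith only [E24]) (by linarith only [E33]) (by linarith only [E34]) (by linarith only [E44])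

    have gn0 : stmt6cnt D (false, false, false, false, false) = 0 := by exact_mod_cast g0
    have gn1 : stmt6cnt D (true, false, false, false, false) = 1 := by exact_mod_cast g1
    have gn2 : stmt6cnt D (false, true, false, false, false) = 1 := by exact_mod_cast g2
    have gn3 : stmt6cnt D (true, true, false, false, false) = 0 := by exact_mod_cast g3
    have gn4 : stmt6cnt D (false, false, true, false, false) = 0 := by exact_mod_cast g4
    have gn5 : stmt6cnt D (true, false, true, false, false) = 0 := by exact_mod_cast g5
    have gn6 : stmt6cnt D (false, true, true, false, false) = 0 := by exact_mod_cast g6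
    have gn7 : stmt6cnt D (true, true, true, false, false) = 1 := by exact_mod_cast g7
    have gn8 : stmt6cnt D (false, false, false, true, false) = 1 := by exact_mod_cast g8
    have gn9 : stmt6cnt D (true, false, false, true, false) = 1 := by exact_mod_cast g9
    have gn10 : stmt6cnt D (false, true, false, true, false) = 0 := by exact_mod_cast g10
    have gn11 : stmt6cnt D (true, true, false, true, false) = 0 := by exact_mod_cast g11
    have gn12 : stmt6cnt D (false, false, true, true, false) = 0 := by exact_mod_cast g12
    have gn13 : stmt6cnt D (true, false, true, true, false) = 1 := by exact_mod_cast g13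
    have gn14 : stmt6cnt D (false, true, true, true, false) = 0 := by exact_mod_cast g14
    have gn15 : stmt6cnt D (true, true, true, true, false) = 0 := by exact_mod_cast g15
    have gn16 : stmt6cnt D (false, false, false, false, true) = 0 := by exact_mod_cast g16
    have gn17 : stmt6cnt D (true, false, false, false, true) = 0 := by exact_mod_cast g17
    have gn18 : stmt6cnt D (false, true, false, false, true) = 0 := by exact_mod_cast g18
    have gn19 : stmt6cnt D (true, true, false, false, true) = 0 := by exact_mod_cast g19
    have gn20 : stmt6cnt D (false, false, true, false, true) = 1 := by exact_mod_cast g20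
    have gn21 : stmt6cnt D (true, false, true, false, true) = 0 := by exact_mod_cast g21
    have gn22 : stmt6cnt D (false, true, true, false, true) = 1 := by exact_mod_cast g22
    have gn23 : stmt6cnt D (true, true, true, false, true) = 0 := by exact_mod_cast g23
    have gn24 : stmt6cnt D (false, false, false, true, true) = 0 := by exact_mod_cast g24
    have gn25 : stmt6cnt D (true, false, false, true, true) = 0 := by exact_mod_cast g25
    have gn26 : stmt6cnt D (false, true, false, true, true) = 0 := by exact_mod_cast g26
    have gn27 : stmt6cnt D (true, true, false, true, true) = 0 := by exact_mod_cast g27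
    have gn28 : stmt6cnt D (false, false, true, true, true) = 0 := by exact_mod_cast g28
    have gn29 : stmt6cnt D (true, false, true, true, true) = 0 := by exact_mod_cast g29
    have gn30 : stmt6cnt D (false, true, true, true, true) = 0 := by exact_mod_cast g30
    have gn31 : stmt6cnt D (true, true, true, true, true) = 0 := by exact_mod_cast g31
    have hcov : ∀ i : Fin 8, ∃ m : Fin 8, stmt6t m = stmt6pws D i := by
      intro i
      have hpos : 0 < stmt6cnt D (stmt6pws D i) :=
        Finset.card_pos.mpr ⟨i, by simp [stmt6cnt]⟩
      rcases hq : stmt6pws D i with ⟨b0, b1, b2, b3, b4⟩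
      rw [hq] at hpos
      cases b0 <;> cases b1 <;> cases b2 <;> cases b3 <;> cases b4
      · rw [gn0] at hpos; exact absurd hpos (by norm_num)
      · rw [gn16] at hpos; exact absurd hpos (by norm_num)
      · exact ⟨4, by decide⟩
      · rw [gn24] at hpos; exact absurd hpos (by norm_num)
      · rw [gn4] at hpos; exact absurd hpos (by norm_num)
      · exact ⟨6, by decide⟩
      · rw [gn12] at hpos; exact absurd hpos (by norm_num)
      · rw [gn28] at hpos; exact absurd hpos (by norm_num)
      · exact ⟨1, by decide⟩
      · rw [gn18] at hpos; exact absurd hpos (by norm_num)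
      · rw [gn10] at hpos; exact absurd hpos (by norm_num)
      · rw [gn26] at hpos; exact absurd hpos (by norm_num)
      · rw [gn6] at hpos; exact absurd hpos (by norm_num)
      · exact ⟨7, by decide⟩
      · rw [gn14] at hpos; exact absurd hpos (by norm_num)
      · rw [gn30] at hpos; exact absurd hpos (by norm_num)
      · exact ⟨0, by decide⟩
      · rw [gn17] at hpos; exact absurd hpos (by norm_num)
      · exact ⟨3, by decide⟩
      · rw [gn25] at hpos; exact absurd hpos (by norm_num)
      · rw [gn5] at hpos; exact absurd hpos (by norm_num)
      · rw [gn21] at hpos; exact absurd hpos (by norm_num)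
      · exact ⟨5, by decide⟩
      · rw [gn29] at hpos; exact absurd hpos (by norm_num)
      · rw [gn3] at hpos; exact absurd hpos (by norm_num)
      · rw [gn19] at hpos; exact absurd hpos (by norm_num)
      · rw [gn11] at hpos; exact absurd hpos (by norm_num)
      · rw [gn27] at hpos; exact absurd hpos (by norm_num)
      · exact ⟨2, by decide⟩
      · rw [gn23] at hpos; exact absurd hpos (by norm_num)
      · rw [gn15] at hpos; exact absurd hpos (by norm_num)
      · rw [gn31] at hpos; exact absurd hpos (by norm_num)
    have hone : ∀ m : Fin 8, stmt6cnt D (stmt6t m) = 1 := by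
      intro m
      fin_cases m
      · exact gn1
      · exact gn2
      · exact gn7
      · exact gn9
      · exact gn8
      · exact gn13
      · exact gn20
      · exact gn22
    choose σ' hσ' using hcov
    have hinj : Function.Injective σ' := by
      intro i i' hii
      have hpp : stmt6pws D i = stmt6pws D i' := by
        rw [← hσ' i, ← hσ' i', hii]
      have hcard : (Finset.univ.filter fun k => stmt6pws D k = stmt6pws D i).card = 1 := by
        have := hone (σ' i)
        rw [hσ' i] at this
        exact this
      exact Finset.card_le_one.mp (le_of_eq hcard) i (by simp) i' (by simp [hpp])
    refine ⟨Equiv.ofBijective σ' (Finite.injective_iff_bijective.mp hinj), ?_⟩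
    intro i j
    have : stmt6D0 (σ' i) j = stmt6prj (stmt6t (σ' i)) j := stmt6D0prj _ _
    rw [Equiv.ofBijective_apply, this, hσ' i, ← hDif]
  · rintro ⟨σ, hσ⟩
    ext j k
    rw [Matrix.mul_apply]
    simp only [Matrix.transpose_apply]
    calc ∑ i : Fin 8, D i j * D i k
        = ∑ i : Fin 8, stmt6D0 (σ i) j * stmt6D0 (σ i) k := by
          refine Finset.sum_congr rfl fun i _ => ?_
          rw [hσ i j, hσ i k]
      _ = ∑ m : Fin 8, stmt6D0 m j * stmt6D0 m k :=
          Equiv.sum_comp σ (fun m => stmt6D0 m j * stmt6D0 m k)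
      _ = stmt6C j k := stmt6D0gram j k
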